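/- arXiv:math/0212129 — 2 statements merged into one kernel-verified Lean document; each statement's English description precedes it below -/
import Mathlib

section
/- If Λ = {n_i} ⊂ ℤ is a lacunary sequence with parameter R (i.e. for every nonzero integer r, the number of pairs (i,j) with n_i − n_j = r is at most R), and g(x) = Σ c_{n_i} e^{2πi n_i x} is an L²[0,1] function with spectrum in Λ, then ‖g‖_{L⁴[0,1]} ≤ (1+R)^{1/4} ‖g‖_{L²[0,1]}. -/
open MeasureTheory Complex Set
open scoped FourierTransform Real

noncomputable section

/-- A set of integers, given as a sequence `n`, is lacunary with parameter `R` if for every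
nonzero integer `r`, the number of pairs `(i,j)` with `n i - n j = r` is at most `R`. -/
def Lacunary (n : ℤ → ℤ) (R : ℕ) : Prop :=
  ∀ r : ℤ, r ≠ 0 → {p : ℤ × ℤ | n p.1 - n p.2 = r}.Finite ∧
    {p : ℤ × ℤ | n p.1 - n p.2 = r}.ncard ≤ R

set_option maxHeartbeats 1000000


def eK (k : ℤ) (x : ℝ) : ℂ := Complex.exp (2 * π * I * k * x)

lemma eK_norm (k : ℤ) (x : ℝ) : ‖eK k x‖ = 1 := by
  rw [eK, Complex.norm_exp]
  have : (2 * ↑π * I * ↑k * ↑x).re = 0 := by simp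
  rw [this, Real.exp_zero]

lemma eK_add (j k : ℤ) (x : ℝ) : eK j x * eK k x = eK (j + k) x := by
  rw [eK, eK, eK, ← Complex.exp_add]
  congr 1
  push_cast
  ring

lemma integral_eK (m : ℤ) :
    (∫ x in Icc (0:ℝ) 1, eK m x) = if m = 0 then 1 else 0 := by
  rw [MeasureTheory.integral_Icc_eq_integral_Ioc,
    ← intervalIntegral.integral_of_le (by norm_num : (0:ℝ) ≤ 1)]
  by_cases hm : m = 0
  · subst hm
    simp [eK]
  · rw [if_neg hm]
    have hc : (2 * ↑π * I * (m:ℂ)) ≠ 0 := by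
      simp [Real.pi_ne_zero, Complex.I_ne_zero, hm]
    have : ∀ x : ℝ, eK m x = Complex.exp ((2 * ↑π * I * (m:ℂ)) * x) := by
      intro x; rw [eK]
    simp_rw [this]
    rw [integral_exp_mul_complex hc]
    have h1 : (2 * ↑π * I * (m:ℂ)) * (1:ℝ) = m * (2 * ↑π * I) := by push_cast; ring
    have h0 : (2 * ↑π * I * (m:ℂ)) * (0:ℝ) = 0 := by push_cast; ring
    rw [h1, h0, Complex.exp_int_mul_two_pi_mul_I, Complex.exp_zero, sub_self, zero_div]

lemma eK_cont (k : ℤ) : Continuous (eK k) := by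
  have : eK k = fun x : ℝ => Complex.exp ((2 * ↑π * I * (k:ℂ)) * (x:ℂ)) := by
    funext x
    rw [eK]
  rw [this]
  exact Complex.continuous_exp.comp (continuous_const.mul Complex.continuous_ofReal)

lemma eK_conj (k : ℤ) (x : ℝ) : (starRingEnd ℂ) (eK k x) = eK (-k) x := by
  rw [eK, eK, ← Complex.exp_conj]
  congr 1
  simp only [map_mul, Complex.conj_I, Complex.conj_ofReal, map_ofNat, map_intCast]
  push_cast
  ring


lemma key_integral {α : Type} [Countable α] (b : α → ℂ)
    (hb : Summable fun q => ‖b q‖) (m : α → ℤ) :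
    (∫ x in Icc (0:ℝ) 1, ∑' q, b q * eK (m q) x) = ∑' q : {q // m q = 0}, b q := by
  have hmeas : ∀ q : α, AEStronglyMeasurable (fun x : ℝ => b q * eK (m q) x)
      (volume.restrict (Icc (0:ℝ) 1)) := fun q =>
    (continuous_const.mul (eK_cont (m q))).aestronglyMeasurable
  have hnorm : ∀ q (x : ℝ), ‖b q * eK (m q) x‖ = ‖b q‖ := by
    intro q x; rw [norm_mul, eK_norm, mul_one]
  have hlint : ∑' q, ∫⁻ x, ‖b q * eK (m q) x‖₊ ∂(volume.restrict (Icc (0:ℝ) 1)) ≠ ⊤ := by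
    have : ∀ q, ∫⁻ x, ‖b q * eK (m q) x‖₊ ∂(volume.restrict (Icc (0:ℝ) 1))
        = (‖b q‖₊ : ENNReal) := by
      intro q
      have : ∀ x : ℝ, (‖b q * eK (m q) x‖₊ : ENNReal) = (‖b q‖₊ : ENNReal) := by
        intro x
        congr 1
        ext
        exact hnorm q x
      simp_rw [this]
      rw [MeasureTheory.lintegral_const]
      simp [Real.volume_Icc]
    simp_rw [this]
    rw [ENNReal.tsum_coe_ne_top_iff_summable]
    exact NNReal.summable_coe.mp (by simpa using hb)
  rw [MeasureTheory.integral_tsum hmeas hlint]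
  have : ∀ q, (∫ x in Icc (0:ℝ) 1, b q * eK (m q) x) = b q * (if m q = 0 then 1 else 0) := by
    intro q
    rw [MeasureTheory.integral_const_mul, integral_eK]
  simp_rw [this]
  have h2 : ∀ q : α, (b q * if m q = 0 then 1 else 0) = Set.indicator {q | m q = 0} b q := by
    intro q
    rw [Set.indicator_apply]
    by_cases h : m q = 0 <;> simp [h]
  rw [tsum_congr h2]
  exact (tsum_subtype {q | m q = 0} b).symm

lemma group_tsum {α : Type} (b : α → ℂ) (hb : Summable fun q => ‖b q‖) (m : α → ℤ)
    (f : ℤ → ℂ) (hf : ∀ r, ‖f r‖ = 1) :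
    ∑' q, b q * f (m q) = ∑' r : ℤ, (∑' q : {q // m q = r}, b q) * f r := by
  have hsum : Summable fun q => b q * f (m q) := by
    apply Summable.of_norm
    apply hb.of_nonneg_of_le (fun q => norm_nonneg _)
    intro q
    rw [norm_mul, hf, mul_one]
  have hsig : Summable fun p : (r : ℤ) × {q // m q = r} => b p.2 * f (m p.2) := by
    exact (Equiv.sigmaFiberEquiv m).summable_iff.mpr hsum
  calc ∑' q, b q * f (m q)
      = ∑' p : (r : ℤ) × {q // m q = r}, b p.2 * f (m p.2) :=
        ((Equiv.sigmaFiberEquiv m).tsum_eq _).symm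
    _ = ∑' (r : ℤ) (q : {q // m q = r}), b q * f (m q.1) := Summable.tsum_sigma hsig
    _ = ∑' r : ℤ, (∑' q : {q // m q = r}, b q) * f r := by
        congr 1
        ext r
        have : ∀ q : {q // m q = r}, b q.1 * f (m q.1) = b q.1 * f r := by
          intro q; rw [q.2]
        rw [tsum_congr this, tsum_mul_right]

lemma group_norm {α : Type} (b : α → ℂ) (hb : Summable fun q => ‖b q‖) (m : α → ℤ) :
    (Summable fun r : ℤ => ∑' q : {q // m q = r}, ‖b q‖) ∧
      ∑' r : ℤ, (∑' q : {q // m q = r}, ‖b q‖) = ∑' q, ‖b q‖ := by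
  have hsig : Summable fun p : (r : ℤ) × {q // m q = r} => ‖b p.2‖ :=
    (Equiv.sigmaFiberEquiv m).summable_iff.mpr hb
  constructor
  · exact hsig.sigma
  · calc ∑' r : ℤ, (∑' q : {q // m q = r}, ‖b q‖)
        = ∑' p : (r : ℤ) × {q // m q = r}, ‖b p.2‖ := (Summable.tsum_sigma hsig).symm
      _ = ∑' q, ‖b q‖ := (Equiv.sigmaFiberEquiv m).tsum_eq (fun q => ‖b q‖)

lemma grouped_summable {α : Type} (b : α → ℂ) (hb : Summable fun q => ‖b q‖) (m : α → ℤ) :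
    Summable fun r : ℤ => ‖∑' q : {q // m q = r}, b q‖ := by
  apply (group_norm b hb m).1.of_nonneg_of_le (fun r => norm_nonneg _)
  intro r
  exact norm_tsum_le_tsum_norm (hb.subtype _)

lemma conj_tsum' {α : Type*} (f : α → ℂ) :
    (starRingEnd ℂ) (∑' v, f v) = ∑' v, (starRingEnd ℂ) (f v) := by
  simp only [starRingEnd_apply]
  exact tsum_star

lemma norm_conj_mul (z w : ℂ) : ‖z * (starRingEnd ℂ) w‖ = ‖z‖ * ‖w‖ := by
  rw [norm_mul, RCLike.norm_conj]

def shearEquiv : ℤ × ℤ ≃ ℤ × ℤ where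
  toFun := fun p => (p.2, p.2 - p.1)
  invFun := fun p => (p.1 - p.2, p.1)
  left_inv := fun p => by ext <;> simp
  right_inv := fun p => by ext <;> simp

def quadEquiv : (ℤ × ℤ × ℤ) ≃
    {P : (ℤ × ℤ) × (ℤ × ℤ) // (P.1.1 - P.1.2) + (P.2.1 - P.2.2) = 0} where
  toFun := fun t => ⟨((t.2.1, t.2.1 - t.1), (t.2.2, t.2.2 + t.1)), by ring⟩
  invFun := fun P => (P.1.1.1 - P.1.1.2, P.1.1.1, P.1.2.1)
  left_inv := fun t => by
    obtain ⟨r, v, y⟩ := t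
    simp only
    ext <;> simp
  right_inv := fun P => by
    obtain ⟨⟨⟨v, w⟩, ⟨y, z⟩⟩, h⟩ := P
    simp only at h
    apply Subtype.ext
    simp only
    have h1 : v - (v - w) = w := by ring
    have h2 : y + (v - w) = z := by omega
    rw [h1, h2]

def diagEquiv : ℤ ≃ {p : ℤ × ℤ // p.1 - p.2 = 0} where
  toFun := fun v => ⟨(v, v), sub_self v⟩
  invFun := fun p => p.1.1
  left_inv := fun v => rfl
  right_inv := fun p => by
    ext
    · rfl
    · exact sub_eq_zero.mp p.2

lemma main_est (R : ℕ) (s : ℤ → ℂ) (hs1 : Summable fun v => ‖s v‖)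
    (hcard : ∀ r : ℤ, r ≠ 0 → {v : ℤ | s v ≠ 0 ∧ s (v - r) ≠ 0}.Finite ∧
      {v : ℤ | s v ≠ 0 ∧ s (v - r) ≠ 0}.ncard ≤ R)
    (g : ℝ → ℂ) (hg : ∀ x, g x = ∑' v, s v * eK v x) :
    ((∫ x in Icc (0:ℝ) 1, ‖g x‖^2) = ∑' v, ‖s v‖^2) ∧
    (∫ x in Icc (0:ℝ) 1, ‖g x‖^4) ≤ (1 + R) * (∑' v, ‖s v‖^2)^2 := by
  set T : ℝ := ∑' v, ‖s v‖ with hT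
  have hsT : ∀ v, ‖s v‖ ≤ T := fun v => Summable.le_tsum hs1 v (fun _ _ => norm_nonneg _)
  have hs2 : Summable fun v => ‖s v‖^2 := by
    apply (hs1.mul_left T).of_nonneg_of_le (fun v => sq_nonneg _)
    intro v
    rw [sq]
    exact mul_le_mul_of_nonneg_right (hsT v) (norm_nonneg _)
  set B : ℝ := ∑' v, ‖s v‖^2 with hB
  have hBnn : 0 ≤ B := tsum_nonneg fun v => sq_nonneg _
  -- the pair coefficients
  set a : ℤ × ℤ → ℂ := fun p => s p.1 * (starRingEnd ℂ) (s p.2) with ha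
  have hsc : Summable fun v => ‖(starRingEnd ℂ) (s v)‖ := by
    simpa [RCLike.norm_conj] using hs1
  have ha1 : Summable fun p => ‖a p‖ := by
    simp only [ha]
    exact Summable.mul_norm (f := s) (g := fun v => (starRingEnd ℂ) (s v)) hs1 hsc
  -- summability of terms of g
  have hterm : ∀ x : ℝ, Summable fun v => ‖s v * eK v x‖ := by
    intro x
    simp only [norm_mul, eK_norm, mul_one]
    exact hs1
  -- conj of g
  have hcg : ∀ x : ℝ, (starRingEnd ℂ) (g x) = ∑' w, (starRingEnd ℂ) (s w) * eK (-w) x := by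
    intro x
    rw [hg x, conj_tsum']
    congr 1
    ext w
    rw [map_mul, eK_conj]
  have hcterm : ∀ x : ℝ, Summable fun w => ‖(starRingEnd ℂ) (s w) * eK (-w) x‖ := by
    intro x
    simp only [norm_mul, eK_norm, RCLike.norm_conj, mul_one]
    exact hs1
  -- |g|^2 as a double sum
  have hgg : ∀ x : ℝ, g x * (starRingEnd ℂ) (g x)
      = ∑' p : ℤ × ℤ, a p * eK (p.1 - p.2) x := by
    intro x
    rw [hcg x, hg x, tsum_mul_tsum_of_summable_norm (hterm x) (hcterm x)]
    congr 1
    ext p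
    rw [mul_mul_mul_comm, eK_add, ha, sub_eq_add_neg]
  have hggnorm : ∀ x : ℝ, ((‖g x‖^2 : ℝ) : ℂ) = ∑' p : ℤ × ℤ, a p * eK (p.1 - p.2) x := by
    intro x
    rw [← hgg x, Complex.mul_conj, Complex.normSq_eq_norm_sq]
  -- the L² identity
  have hL2 : (∫ x in Icc (0:ℝ) 1, ‖g x‖^2) = B := by
    have h2 := key_integral a ha1 (fun p => p.1 - p.2)
    beta_reduce at h2
    simp_rw [← hggnorm] at h2
    have hoi : (∫ x in Icc (0:ℝ) 1, ((‖g x‖^2 : ℝ) : ℂ))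
        = ((∫ x in Icc (0:ℝ) 1, ‖g x‖^2 : ℝ) : ℂ) := integral_ofReal
    rw [hoi] at h2
    have h3 : ∑' q : {p : ℤ × ℤ // p.1 - p.2 = 0}, a q
        = ∑' v : ℤ, a (v, v) := by
      symm
      refine Eq.trans ?_ (diagEquiv.tsum_eq (fun q : {p : ℤ × ℤ // p.1 - p.2 = 0} => a q.val))
      exact tsum_congr fun v => rfl
    have h4 : ∑' v : ℤ, a (v, v) = ((B : ℝ) : ℂ) := by
      have : ∀ v : ℤ, a (v, v) = ((‖s v‖^2 : ℝ) : ℂ) := by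
        intro v
        rw [ha]
        simp only
        rw [Complex.mul_conj, Complex.normSq_eq_norm_sq]
      rw [tsum_congr this, hB]
      exact (Complex.ofRealCLM.map_tsum hs2).symm
    rw [h3, h4] at h2
    exact_mod_cast h2
  refine ⟨hL2, ?_⟩
  -- the autocorrelation coefficients
  set E : ℤ → ℂ := fun r => ∑' v, s v * (starRingEnd ℂ) (s (v - r)) with hE
  have hpair : ∀ w : ℤ → ℤ, Summable fun v => ‖s v * (starRingEnd ℂ) (s (w v))‖ := by
    intro w
    apply (hs1.mul_left T).of_nonneg_of_le (fun v => norm_nonneg _)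
    intro v
    rw [norm_mul, RCLike.norm_conj]
    calc ‖s v‖ * ‖s (w v)‖ ≤ ‖s v‖ * T :=
          mul_le_mul_of_nonneg_left (hsT (w v)) (norm_nonneg _)
      _ = T * ‖s v‖ := mul_comm _ _
  have hconjE : ∀ r : ℤ, (starRingEnd ℂ) (E r) = ∑' y, s y * (starRingEnd ℂ) (s (y + r)) := by
    intro r
    rw [hE]
    simp only
    rw [conj_tsum']
    have h1 : ∀ v : ℤ, (starRingEnd ℂ) (s v * (starRingEnd ℂ) (s (v - r)))
        = (starRingEnd ℂ) (s v) * s (v - r) := by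
      intro v
      rw [map_mul, Complex.conj_conj]
    rw [tsum_congr h1]
    calc ∑' v, (starRingEnd ℂ) (s v) * s (v - r)
        = ∑' y, (starRingEnd ℂ) (s (y + r)) * s (y + r - r) :=
          ((Equiv.addRight r).tsum_eq (fun v => (starRingEnd ℂ) (s v) * s (v - r))).symm
      _ = ∑' y, s y * (starRingEnd ℂ) (s (y + r)) := by
          refine tsum_congr fun y => ?_
          rw [add_sub_cancel_right, mul_comm]
  -- the quadruple coefficients
  set b4 : (ℤ × ℤ) × (ℤ × ℤ) → ℂ := fun P => a P.1 * a P.2 with hb4def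
  set m4 : (ℤ × ℤ) × (ℤ × ℤ) → ℤ := fun P => (P.1.1 - P.1.2) + (P.2.1 - P.2.2) with hm4def
  have hb4 : Summable fun P => ‖b4 P‖ := by
    simp only [hb4def]
    exact Summable.mul_norm (f := a) (g := a) ha1 ha1
  have haK : ∀ x : ℝ, Summable fun p : ℤ × ℤ => ‖a p * eK (p.1 - p.2) x‖ := by
    intro x
    simp only [norm_mul, eK_norm, mul_one]
    exact ha1
  have hg4 : ∀ x : ℝ, ((‖g x‖^4 : ℝ) : ℂ) = ∑' P : (ℤ × ℤ) × (ℤ × ℤ), b4 P * eK (m4 P) x := by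
    intro x
    have e1 : ((‖g x‖^4 : ℝ) : ℂ) = ((‖g x‖^2 : ℝ) : ℂ) * ((‖g x‖^2 : ℝ) : ℂ) := by
      push_cast; ring
    rw [e1, hggnorm x,
      tsum_mul_tsum_of_summable_norm (haK x) (haK x)]
    refine tsum_congr fun P => ?_
    rw [mul_mul_mul_comm, eK_add]
  -- integrate
  have hI4 : ((∫ x in Icc (0:ℝ) 1, ‖g x‖^4 : ℝ) : ℂ) = ∑' q : {P // m4 P = 0}, b4 q := by
    have h2 := key_integral b4 hb4 m4
    simp_rw [← hg4] at h2
    have hoi : (∫ x in Icc (0:ℝ) 1, ((‖g x‖^4 : ℝ) : ℂ))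
        = ((∫ x in Icc (0:ℝ) 1, ‖g x‖^4 : ℝ) : ℂ) := integral_ofReal
    rw [hoi] at h2
    exact h2
  -- reorganize the quadruple sum
  have hinner : ∀ r : ℤ, Summable fun q : ℤ × ℤ =>
      (s q.1 * (starRingEnd ℂ) (s (q.1 - r))) * (s q.2 * (starRingEnd ℂ) (s (q.2 + r))) := by
    intro r
    apply Summable.of_norm
    exact Summable.mul_norm (f := fun v => s v * (starRingEnd ℂ) (s (v - r)))
      (g := fun y => s y * (starRingEnd ℂ) (s (y + r)))
      (hpair (fun v => v - r)) (hpair (fun y => y + r))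
  have hFsum : Summable fun t : ℤ × ℤ × ℤ =>
      (s t.2.1 * (starRingEnd ℂ) (s (t.2.1 - t.1))) *
        (s t.2.2 * (starRingEnd ℂ) (s (t.2.2 + t.1))) := by
    have h1 : Summable b4 := hb4.of_norm
    have h2 : Summable fun q : {P // m4 P = 0} => b4 q.val := by
      exact h1.subtype _
    have h3 := (quadEquiv.summable_iff (f := fun q :
        {P : (ℤ × ℤ) × (ℤ × ℤ) // (P.1.1 - P.1.2) + (P.2.1 - P.2.2) = 0} => b4 q.val)).mpr
    refine Summable.congr (h3 (by exact h2)) fun t => ?_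
    simp only [hb4def, ha, quadEquiv]
    rfl
  have hsplit : (∑' q : {P // m4 P = 0}, b4 q) = ∑' r : ℤ, E r * (starRingEnd ℂ) (E r) := by
    have h0 : (∑' q : {P // m4 P = 0}, b4 q)
        = ∑' t : ℤ × ℤ × ℤ, (s t.2.1 * (starRingEnd ℂ) (s (t.2.1 - t.1))) *
            (s t.2.2 * (starRingEnd ℂ) (s (t.2.2 + t.1))) := by
      symm
      refine Eq.trans ?_ (quadEquiv.tsum_eq (fun q :
        {P : (ℤ × ℤ) × (ℤ × ℤ) // (P.1.1 - P.1.2) + (P.2.1 - P.2.2) = 0} => b4 q.val))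
      refine tsum_congr fun t => ?_
      simp only [hb4def, ha, quadEquiv]
      rfl
    rw [h0, Summable.tsum_prod' hFsum (fun r => hinner r)]
    refine tsum_congr fun r => ?_
    have h1 : (∑' q : ℤ × ℤ, (s q.1 * (starRingEnd ℂ) (s (q.1 - r))) *
        (s q.2 * (starRingEnd ℂ) (s (q.2 + r))))
        = (∑' v, s v * (starRingEnd ℂ) (s (v - r))) *
          (∑' y, s y * (starRingEnd ℂ) (s (y + r))) :=
      (tsum_mul_tsum_of_summable_norm (hpair (fun v => v - r)) (hpair (fun y => y + r))).symm
    rw [show (∑' (c : ℤ × ℤ), (fun q : ℤ × ℤ => (s q.1 * (starRingEnd ℂ) (s (q.1 - r))) *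
        (s q.2 * (starRingEnd ℂ) (s (q.2 + r)))) c) = _ from h1, ← hconjE r, hE]
  -- identify with norms
  have hEnorm : ∀ r : ℤ, E r * (starRingEnd ℂ) (E r) = ((‖E r‖^2 : ℝ) : ℂ) := by
    intro r
    rw [Complex.mul_conj, Complex.normSq_eq_norm_sq]
  -- summability of the convolution bounds
  have ht2 : Summable fun r : ℤ => ∑' v, ‖s v‖ * ‖s (v - r)‖ := by
    have hW : Summable fun p : ℤ × ℤ => ‖s p.1‖ * ‖s p.2‖ :=
      Summable.mul_of_nonneg (f := fun v => ‖s v‖) (g := fun v => ‖s v‖) hs1 hs1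
        (fun v => norm_nonneg _) (fun v => norm_nonneg _)
    have hWs : Summable fun p : ℤ × ℤ => ‖s p.2‖ * ‖s (p.2 - p.1)‖ := by
      have := shearEquiv.summable_iff (f := fun p : ℤ × ℤ => ‖s p.1‖ * ‖s p.2‖)
      exact this.mpr hW
    have hsig : Summable fun q : Σ _ : ℤ, ℤ => ‖s q.2‖ * ‖s (q.2 - q.1)‖ := by
      exact ((Equiv.sigmaEquivProd ℤ ℤ).summable_iff).mpr hWs
    exact hsig.sigma
  have hEt2 : ∀ r : ℤ, ‖E r‖ ≤ ∑' v, ‖s v‖ * ‖s (v - r)‖ := by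
    intro r
    rw [hE]
    simp only
    refine le_trans (norm_tsum_le_tsum_norm (hpair (fun v => v - r))) ?_
    refine le_of_eq (tsum_congr fun v => ?_)
    rw [norm_mul, RCLike.norm_conj]
  have ht2T : ∀ r : ℤ, (∑' v, ‖s v‖ * ‖s (v - r)‖) ≤ T * T := by
    intro r
    have h1 : ∀ v : ℤ, ‖s v‖ * ‖s (v - r)‖ ≤ ‖s v‖ * T := fun v =>
      mul_le_mul_of_nonneg_left (hsT _) (norm_nonneg _)
    calc (∑' v, ‖s v‖ * ‖s (v - r)‖) ≤ ∑' v, ‖s v‖ * T :=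
          Summable.tsum_le_tsum h1 (by
            refine Summable.of_nonneg_of_le (fun v => mul_nonneg (norm_nonneg _) (norm_nonneg _)) h1 ?_
            exact hs1.mul_right T) (hs1.mul_right T)
      _ = T * T := by rw [tsum_mul_right]
  have ht2nn : ∀ r : ℤ, 0 ≤ ∑' v, ‖s v‖ * ‖s (v - r)‖ := fun r =>
    tsum_nonneg fun v => mul_nonneg (norm_nonneg _) (norm_nonneg _)
  have hEsq : Summable fun r : ℤ => ‖E r‖^2 := by
    apply ((ht2.mul_left (T * T)).of_nonneg_of_le (fun r => sq_nonneg _))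
    intro r
    calc ‖E r‖^2 ≤ (∑' v, ‖s v‖ * ‖s (v - r)‖)^2 := by
          apply sq_le_sq'
          · linarith [norm_nonneg (E r), hEt2 r, ht2nn r]
          · exact hEt2 r
      _ = (∑' v, ‖s v‖ * ‖s (v - r)‖) * (∑' v, ‖s v‖ * ‖s (v - r)‖) := sq _
      _ ≤ (T * T) * (∑' v, ‖s v‖ * ‖s (v - r)‖) :=
          mul_le_mul_of_nonneg_right (ht2T r) (ht2nn r)
  -- express the L⁴ integral
  have hL4 : (∫ x in Icc (0:ℝ) 1, ‖g x‖^4) = ∑' r : ℤ, ‖E r‖^2 := by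
    have h5 : ((∫ x in Icc (0:ℝ) 1, ‖g x‖^4 : ℝ) : ℂ) = ((∑' r : ℤ, ‖E r‖^2 : ℝ) : ℂ) := by
      rw [hI4, hsplit, tsum_congr hEnorm]
      exact (Complex.ofRealCLM.map_tsum hEsq).symm
    exact_mod_cast h5
  rw [hL4]
  -- the quadratic convolution
  have hW2 : Summable fun p : ℤ × ℤ => ‖s p.1‖^2 * ‖s p.2‖^2 :=
    Summable.mul_of_nonneg (f := fun v => ‖s v‖^2) (g := fun v => ‖s v‖^2) hs2 hs2
      (fun v => sq_nonneg _) (fun v => sq_nonneg _)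
  have hW2s : Summable fun p : ℤ × ℤ => ‖s p.2‖^2 * ‖s (p.2 - p.1)‖^2 := by
    have := shearEquiv.summable_iff (f := fun p : ℤ × ℤ => ‖s p.1‖^2 * ‖s p.2‖^2)
    exact this.mpr hW2
  have hinner2 : ∀ r : ℤ, Summable fun v : ℤ => ‖s v‖^2 * ‖s (v - r)‖^2 := by
    intro r
    have heq : (fun v : ℤ => ‖s v‖^2 * ‖s (v - r)‖^2)
        = (fun p : ℤ × ℤ => ‖s p.1‖^2 * ‖s p.2‖^2) ∘ (fun v : ℤ => ((v, v - r) : ℤ × ℤ)) := rfl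
    rw [heq]
    apply hW2.comp_injective
    intro x y h
    simpa using (Prod.ext_iff.mp h).1
  have hu : Summable fun r : ℤ => ∑' v, ‖s v‖^2 * ‖s (v - r)‖^2 := by
    have hsig : Summable fun q : Σ _ : ℤ, ℤ => ‖s q.2‖^2 * ‖s (q.2 - q.1)‖^2 := by
      exact ((Equiv.sigmaEquivProd ℤ ℤ).summable_iff).mpr hW2s
    exact hsig.sigma
  have hunn : ∀ r : ℤ, 0 ≤ ∑' v, ‖s v‖^2 * ‖s (v - r)‖^2 := fun r =>
    tsum_nonneg fun v => mul_nonneg (sq_nonneg _) (sq_nonneg _)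
  have hs2n : Summable fun v : ℤ => ‖(‖s v‖^2 : ℝ)‖ := by
    have : (fun v : ℤ => ‖(‖s v‖^2 : ℝ)‖) = fun v : ℤ => ‖s v‖^2 :=
      funext fun v => Real.norm_of_nonneg (sq_nonneg _)
    rw [this]; exact hs2
  have husum : (∑' r : ℤ, ∑' v, ‖s v‖^2 * ‖s (v - r)‖^2) = B^2 := by
    calc (∑' r : ℤ, ∑' v, ‖s v‖^2 * ‖s (v - r)‖^2)
        = ∑' p : ℤ × ℤ, ‖s p.2‖^2 * ‖s (p.2 - p.1)‖^2 :=
          (Summable.tsum_prod' hW2s (fun r => hinner2 r)).symm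
      _ = ∑' p : ℤ × ℤ, ‖s p.1‖^2 * ‖s p.2‖^2 := by
          exact shearEquiv.tsum_eq (fun p : ℤ × ℤ => ‖s p.1‖^2 * ‖s p.2‖^2)
      _ = B * B := by
          rw [hB]
          exact (tsum_mul_tsum_of_summable_norm hs2n hs2n).symm
      _ = B^2 := (sq B).symm
  -- the bound for a single nonzero frequency
  have hrb : ∀ r : ℤ, r ≠ 0 → ‖E r‖^2 ≤ (R:ℝ) * ∑' v, ‖s v‖^2 * ‖s (v - r)‖^2 := by
    intro r hr
    obtain ⟨hVfin, hVcard⟩ := hcard r hr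
    set F : Finset ℤ := hVfin.toFinset with hF
    have hEsum : E r = ∑ v ∈ F, s v * (starRingEnd ℂ) (s (v - r)) := by
      rw [hE]
      simp only
      apply tsum_eq_sum
      intro v hv
      have hnv : ¬(s v ≠ 0 ∧ s (v - r) ≠ 0) := by
        simpa [hF, Set.Finite.mem_toFinset] using hv
      by_cases h1 : s v = 0
      · rw [h1, zero_mul]
      · have h2 : s (v - r) = 0 := by tauto
        rw [h2, map_zero, mul_zero]
    have h1 : ‖E r‖ ≤ ∑ v ∈ F, ‖s v‖ * ‖s (v - r)‖ := by
      rw [hEsum]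
      refine (norm_sum_le _ _).trans (le_of_eq ?_)
      exact Finset.sum_congr rfl fun v _ => norm_conj_mul _ _
    have hsumnn : (0:ℝ) ≤ ∑ v ∈ F, ‖s v‖ * ‖s (v - r)‖ :=
      Finset.sum_nonneg fun v _ => mul_nonneg (norm_nonneg _) (norm_nonneg _)
    have h2 : (∑ v ∈ F, ‖s v‖ * ‖s (v - r)‖)^2
        ≤ (F.card : ℝ) * ∑ v ∈ F, (‖s v‖ * ‖s (v - r)‖)^2 := by
      have hcs := Finset.sum_mul_sq_le_sq_mul_sq F (fun _ => (1:ℝ))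
        (fun v => ‖s v‖ * ‖s (v - r)‖)
      simpa [one_pow, Finset.sum_const, nsmul_eq_mul, one_mul] using hcs
    have h3 : (∑ v ∈ F, (‖s v‖ * ‖s (v - r)‖)^2) ≤ ∑' v, ‖s v‖^2 * ‖s (v - r)‖^2 := by
      have heq : ∀ v ∈ F, (‖s v‖ * ‖s (v - r)‖)^2 = ‖s v‖^2 * ‖s (v - r)‖^2 :=
        fun v _ => by ring
      rw [Finset.sum_congr rfl heq]
      exact Summable.sum_le_tsum F (fun v _ => mul_nonneg (sq_nonneg _) (sq_nonneg _)) (hinner2 r)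
    have hcardR : (F.card : ℝ) ≤ (R : ℝ) := by
      have hc := hVcard
      rw [Set.ncard_eq_toFinset_card _ hVfin] at hc
      exact_mod_cast hc
    calc ‖E r‖^2 ≤ (∑ v ∈ F, ‖s v‖ * ‖s (v - r)‖)^2 := by
          apply sq_le_sq'
          · linarith [norm_nonneg (E r)]
          · exact h1
      _ ≤ (F.card : ℝ) * ∑ v ∈ F, (‖s v‖ * ‖s (v - r)‖)^2 := h2
      _ ≤ (F.card : ℝ) * ∑' v, ‖s v‖^2 * ‖s (v - r)‖^2 :=
          mul_le_mul_of_nonneg_left h3 (Nat.cast_nonneg _)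
      _ ≤ (R : ℝ) * ∑' v, ‖s v‖^2 * ‖s (v - r)‖^2 :=
          mul_le_mul_of_nonneg_right hcardR (hunn r)
  -- the zero frequency
  have hE0 : ‖E 0‖^2 = B^2 := by
    have hE0' : E 0 = ((B : ℝ) : ℂ) := by
      rw [hE]
      simp only
      have heq : ∀ v : ℤ, s v * (starRingEnd ℂ) (s (v - 0)) = ((‖s v‖^2 : ℝ) : ℂ) := by
        intro v
        rw [sub_zero, Complex.mul_conj, Complex.normSq_eq_norm_sq]
      rw [tsum_congr heq, hB]
      exact (Complex.ofRealCLM.map_tsum hs2).symm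
    rw [hE0', Complex.norm_real, Real.norm_of_nonneg hBnn]
  -- assemble
  have hite : Summable fun r : ℤ => if r = 0 then (0:ℝ) else ‖E r‖^2 := by
    apply hEsq.of_nonneg_of_le
    · intro r
      by_cases h : r = 0 <;> simp [h, sq_nonneg]
    · intro r
      by_cases h : r = 0 <;> simp [h, sq_nonneg]
  calc (∑' r : ℤ, ‖E r‖^2)
      = ‖E 0‖^2 + ∑' r : ℤ, if r = 0 then (0:ℝ) else ‖E r‖^2 := Summable.tsum_eq_add_tsum_ite hEsq 0
    _ ≤ B^2 + (R:ℝ) * B^2 := by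
        refine add_le_add (le_of_eq hE0) ?_
        calc (∑' r : ℤ, if r = 0 then (0:ℝ) else ‖E r‖^2)
            ≤ ∑' r : ℤ, (R:ℝ) * ∑' v, ‖s v‖^2 * ‖s (v - r)‖^2 := by
              refine Summable.tsum_le_tsum ?_ hite (hu.mul_left _)
              intro r
              by_cases h : r = 0
              · simp only [h, if_pos rfl]
                exact mul_nonneg (Nat.cast_nonneg _) (hunn 0)
              · simp only [if_neg h]
                exact hrb r h
          _ = (R:ℝ) * B^2 := by rw [tsum_mul_left, husum]
    _ = (1 + (R:ℝ)) * B^2 := by ring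


/-- If the spectrum of `g ∈ L²[0,1]` lies in a lacunary set with parameter `R`, then
`‖g‖₄ ≤ (1+R)^{1/4} ‖g‖₂`. -/
theorem stmt0 (n : ℤ → ℤ) (R : ℕ) (hlac : Lacunary n R)
    (c : ℤ → ℂ) (hc : Summable fun i => ‖c i‖ ^ 2)
    (g : ℝ → ℂ)
    (hg : ∀ x : ℝ, g x = ∑' i : ℤ, c i * Complex.exp (2 * π * I * (n i) * x)) :
    (∫ x in Set.Icc (0:ℝ) 1, ‖g x‖ ^ 4) ^ ((1:ℝ)/4) ≤
      ((1 + R : ℝ)) ^ ((1:ℝ)/4) * (∫ x in Set.Icc (0:ℝ) 1, ‖g x‖ ^ 2) ^ ((1:ℝ)/2) := by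
  classical
  by_cases hc1 : Summable fun i => ‖c i‖
  · -- main case : absolutely summable coefficients
    set s : ℤ → ℂ := fun v => ∑' i : {i // n i = v}, c i with hsdef
    have hs1 : Summable fun v => ‖s v‖ := grouped_summable c hc1 n
    have hgs : ∀ x : ℝ, g x = ∑' v : ℤ, s v * eK v x := by
      intro x
      rw [hg x]
      exact group_tsum c hc1 n (fun r => eK r x) (fun r => eK_norm r x)
    have hsupp : ∀ v : ℤ, s v ≠ 0 → ∃ i, n i = v := by
      intro v hv
      by_contra hno
      push_neg at hno
      apply hv
      have : IsEmpty {i // n i = v} := ⟨fun q => hno q.1 q.2⟩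
      rw [hsdef]
      exact tsum_empty
    have hcard' : ∀ r : ℤ, r ≠ 0 → {v : ℤ | s v ≠ 0 ∧ s (v - r) ≠ 0}.Finite ∧
        {v : ℤ | s v ≠ 0 ∧ s (v - r) ≠ 0}.ncard ≤ R := by
      intro r hr
      obtain ⟨hQf, hQc⟩ := hlac r hr
      set φ : ℤ → ℤ := fun v => if h : ∃ i, n i = v then h.choose else 0 with hφ
      have hφn : ∀ v, (∃ i, n i = v) → n (φ v) = v := by
        intro v h
        rw [hφ]
        simp only [dif_pos h]
        exact h.choose_spec
      set V := {v : ℤ | s v ≠ 0 ∧ s (v - r) ≠ 0} with hV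
      set ψ : ℤ → ℤ × ℤ := fun v => (φ v, φ (v - r)) with hψ
      have hmaps : ∀ v ∈ V, ψ v ∈ {p : ℤ × ℤ | n p.1 - n p.2 = r} := by
        intro v hv
        obtain ⟨h1, h2⟩ := hv
        simp only [hψ, Set.mem_setOf_eq]
        rw [hφn v (hsupp v h1), hφn (v - r) (hsupp _ h2)]
        ring
      have hinj : Set.InjOn ψ V := by
        intro x hx y hy hxy
        have h1 : n (φ x) = x := hφn x (hsupp x hx.1)
        have h2 : n (φ y) = y := hφn y (hsupp y hy.1)
        have h3 : φ x = φ y := (Prod.ext_iff.mp hxy).1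
        rw [← h1, ← h2, h3]
      have hVfin : V.Finite := by
        apply Set.Finite.of_finite_image ?_ hinj
        apply hQf.subset
        rintro _ ⟨v, hv, rfl⟩
        exact hmaps v hv
      exact ⟨hVfin, le_trans (Set.ncard_le_ncard_of_injOn ψ hmaps hinj hQf) hQc⟩
    obtain ⟨hL2, hL4⟩ := main_est R s hs1 hcard' g hgs
    set B : ℝ := ∑' v : ℤ, ‖s v‖^2 with hB
    have hBnn : 0 ≤ B := tsum_nonneg fun v => sq_nonneg _
    have hInn : 0 ≤ ∫ x in Set.Icc (0:ℝ) 1, ‖g x‖^4 :=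
      integral_nonneg fun x => by positivity
    rw [hL2]
    calc (∫ x in Set.Icc (0:ℝ) 1, ‖g x‖^4) ^ ((1:ℝ)/4)
        ≤ ((1 + (R:ℝ)) * B^2) ^ ((1:ℝ)/4) :=
          Real.rpow_le_rpow hInn hL4 (by norm_num)
      _ = (1 + (R:ℝ)) ^ ((1:ℝ)/4) * (B^2) ^ ((1:ℝ)/4) :=
          Real.mul_rpow (by positivity) (sq_nonneg _)
      _ = (1 + (R:ℝ)) ^ ((1:ℝ)/4) * B ^ ((1:ℝ)/2) := by
          congr 1
          rw [← Real.rpow_natCast B 2, ← Real.rpow_mul hBnn]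
          norm_num
  · -- degenerate case : the series is nowhere summable, so g = 0
    have hz : ∀ x : ℝ, g x = 0 := by
      intro x
      rw [hg x]
      apply tsum_eq_zero_of_not_summable
      intro hs
      apply hc1
      have h2 := summable_norm_iff.mpr hs
      refine h2.congr fun i => ?_
      rw [norm_mul]
      have h3 : ‖Complex.exp (2 * ↑π * I * (n i : ℂ) * (x:ℂ))‖ = 1 := eK_norm (n i) x
      rw [h3, mul_one]
    have h4 : (∫ x in Set.Icc (0:ℝ) 1, ‖g x‖^4) = 0 := by simp [hz]
    have h5 : (∫ x in Set.Icc (0:ℝ) 1, ‖g x‖^2) = 0 := by simp [hz]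
    rw [h4, h5, Real.zero_rpow (by norm_num), Real.zero_rpow (by norm_num), mul_zero]
end
end

section
/- There is an absolute constant C such that for all integers k ≠ l, Σ_{n ∈ ℤ} 1/((1 + (n+k)²)(1 + (n+l)²)) ≤ C / (k − l)². -/
open MeasureTheory Complex Set
open scoped FourierTransform Real

noncomputable section

lemma summable_base' : Summable (fun n : ℤ => 1 / (1 + (n:ℝ)^2)) := by
  have hg : Summable (fun n : ℤ => 1 / (n:ℝ)^2) :=
    (Real.summable_one_div_int_pow).mpr one_lt_two
  apply Summable.of_norm_bounded_eventually hg
  have : {n : ℤ | ¬ ‖1 / (1 + (n:ℝ)^2)‖ ≤ 1 / (n:ℝ)^2} ⊆ {0} := by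
    intro n hn
    simp only [Set.mem_setOf_eq, not_le] at hn
    by_contra h0
    have hn0 : (n:ℝ) ≠ 0 := Int.cast_ne_zero.mpr h0
    have h1 : (0:ℝ) < (n:ℝ)^2 := by positivity
    have : ‖1 / (1 + (n:ℝ)^2)‖ = 1 / (1 + (n:ℝ)^2) := by
      rw [Real.norm_eq_abs, abs_of_pos (by positivity)]
    rw [this] at hn
    have : 1 / (1 + (n:ℝ)^2) ≤ 1 / (n:ℝ)^2 := by
      apply one_div_le_one_div_of_le h1; linarith
    linarith
  exact Filter.eventually_cofinite.mpr ((Set.finite_singleton 0).subset this)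

lemma summable_shift (k : ℤ) : Summable (fun n : ℤ => 1 / (1 + ((n:ℝ) + k)^2)) := by
  have := (Equiv.addRight k).summable_iff.mpr summable_base'
  refine this.congr fun n => ?_
  simp [Equiv.addRight]

lemma tsum_shift (k : ℤ) :
    (∑' n : ℤ, 1 / (1 + ((n:ℝ) + k)^2)) = ∑' n : ℤ, 1 / (1 + (n:ℝ)^2) := by
  rw [← (Equiv.addRight k).tsum_eq (fun m : ℤ => 1 / (1 + (m:ℝ)^2))]
  refine tsum_congr fun n => ?_
  simp [Equiv.addRight]

lemma pointwise_bd (a b d : ℝ) (hd : d = a - b) (hd0 : d ≠ 0) :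
    1 / ((1 + a^2) * (1 + b^2)) ≤ 4 / d^2 * (1 / (1 + a^2) + 1 / (1 + b^2)) := by
  have hA : (0:ℝ) < 1 + a^2 := by positivity
  have hB : (0:ℝ) < 1 + b^2 := by positivity
  have hd2 : (0:ℝ) < d^2 := by positivity
  subst hd
  have hkey : (a-b)^2 ≤ 4 * ((1 + b^2) + (1 + a^2)) := by nlinarith [sq_nonneg (a + b)]
  rw [div_add_div _ _ hA.ne' hB.ne', div_mul_div_comm, div_le_div_iff₀ (by positivity) (by positivity)]
  nlinarith [mul_le_mul_of_nonneg_right hkey (mul_pos hA hB).le, mul_pos hA hB]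

/-- There is an absolute constant `C` such that for distinct integers `k ≠ l`,
`Σ_{n ∈ ℤ} 1/((1+(n+k)²)(1+(n+l)²)) ≤ C/(k-l)²`. -/
theorem stmt3 :
    ∃ C : ℝ, 0 < C ∧ ∀ k l : ℤ, k ≠ l →
      (∑' m : ℤ, 1 / ((1 + ((m:ℝ) + k) ^ 2) * (1 + ((m:ℝ) + l) ^ 2))) ≤
        C / ((k:ℝ) - l) ^ 2 := by
  set S : ℝ := ∑' n : ℤ, 1 / (1 + (n:ℝ)^2) with hS
  have hSnn : 0 ≤ S := tsum_nonneg fun n => by positivity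
  refine ⟨8 * S + 1, by positivity, fun k l hkl => ?_⟩
  set d : ℝ := (k:ℝ) - l with hd
  have hd0 : d ≠ 0 := by
    simp only [hd, sub_ne_zero]
    exact_mod_cast fun h => hkl (by exact_mod_cast h)
  have hd2 : (0:ℝ) < d^2 := by positivity
  have hsk := summable_shift k
  have hsl := summable_shift l
  have hg : Summable (fun n : ℤ => 4 / d^2 * (1 / (1 + ((n:ℝ) + k)^2) + 1 / (1 + ((n:ℝ) + l)^2))) :=
    ((hsk.add hsl).mul_left _)
  have hf : Summable (fun n : ℤ => 1 / ((1 + ((n:ℝ) + k)^2) * (1 + ((n:ℝ) + l)^2))) := by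
    apply Summable.of_nonneg_of_le (fun n => by positivity) (fun n => ?_) hg
    exact pointwise_bd _ _ d (by ring) hd0
  calc (∑' m : ℤ, 1 / ((1 + ((m:ℝ) + k) ^ 2) * (1 + ((m:ℝ) + l) ^ 2)))
      ≤ ∑' n : ℤ, 4 / d^2 * (1 / (1 + ((n:ℝ) + k)^2) + 1 / (1 + ((n:ℝ) + l)^2)) := by
        apply Summable.tsum_le_tsum (fun n => pointwise_bd _ _ d (by ring) hd0) hf hg
    _ = 4 / d^2 * (S + S) := by
        rw [tsum_mul_left, Summable.tsum_add hsk hsl, tsum_shift, tsum_shift]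
    _ ≤ (8 * S + 1) / d^2 := by
        rw [div_mul_eq_mul_div]
        gcongr
        linarith
end
end
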